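/- Let C and O be tables with a foreign key O → C and tuple factors F(c) = #orders of c. Let φ be a predicate on customers and ψ on orders. Under the uniform distribution on orders, assume the customer-attribute event φ (lifted to orders via the foreign key) is independent of ψ. Then the join count with both predicates can equivalently be computed as |O| · P_O(ψ) · E_C(1_φ · F) / E_C(F), where E_C is expectation under the uniform distribution over customers. -/

import Mathlib

open Finset

/-- With a foreign key `owner : O → C` and tuple factors
`F c = #orders of c`, predicates `φ` on customers and `ψ` on orders, assuming the
lifted event `φ ∘ owner` is independent of `ψ` under the uniform distribution on
orders, the join count with both predicates equals
`|O| · P_O(ψ) · E_C(1_φ · F) / E_C(F)`. -/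
theorem combine_two_rspns_alternative_normalization
    {C O : Type*} [Fintype C] [Fintype O] [DecidableEq C] [Nonempty C] [Nonempty O]
    (owner : O → C)
    (F : C → ℕ) (hF : ∀ c, F c = (Finset.univ.filter (fun o => owner o = c)).card)
    (φ : C → Prop) [DecidablePred φ] (ψ : O → Prop) [DecidablePred ψ]
    (hindep :
      ((Finset.univ.filter (fun o : O => φ (owner o) ∧ ψ o)).card : ℝ) / (Fintype.card O : ℝ) =
        ((Finset.univ.filter (fun o : O => φ (owner o))).card : ℝ) / (Fintype.card O : ℝ) *
        (((Finset.univ.filter ψ).card : ℝ) / (Fintype.card O : ℝ))) :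
    (((Finset.univ ×ˢ Finset.univ).filter
        (fun p : C × O => owner p.2 = p.1 ∧ φ p.1 ∧ ψ p.2)).card : ℝ) =
      (Fintype.card O : ℝ) *
        (((Finset.univ.filter ψ).card : ℝ) / (Fintype.card O : ℝ)) *
        (((∑ c, (if φ c then (F c : ℝ) else 0)) / (Fintype.card C : ℝ)) /
          ((∑ c, (F c : ℝ)) / (Fintype.card C : ℝ))) := by
  classical
  have hO : (Fintype.card O : ℝ) ≠ 0 := by
    exact_mod_cast Fintype.card_ne_zero
  have hC : (Fintype.card C : ℝ) ≠ 0 := by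
    exact_mod_cast Fintype.card_ne_zero
  -- join count equals count on O
  have hjoin : ((Finset.univ ×ˢ Finset.univ).filter
      (fun p : C × O => owner p.2 = p.1 ∧ φ p.1 ∧ ψ p.2)).card =
      (Finset.univ.filter (fun o : O => φ (owner o) ∧ ψ o)).card := by
    apply Finset.card_bij (fun p _ => p.2)
    · intro p hp
      simp only [mem_filter, mem_product] at hp ⊢
      obtain ⟨-, h1, h2, h3⟩ := hp
      exact ⟨mem_univ _, h1 ▸ h2, h3⟩
    · intro p hp q hq h
      simp only [mem_filter, mem_product] at hp hq
      obtain ⟨-, h1, -, -⟩ := hp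
      obtain ⟨-, h1', -, -⟩ := hq
      exact Prod.ext (by rw [← h1, ← h1', h]) h
    · intro o ho
      simp only [mem_filter, mem_univ, true_and] at ho
      exact ⟨(owner o, o), by simp [ho.1, ho.2], rfl⟩
  -- ∑ F = |O|
  have hsumF : (∑ c, (F c : ℝ)) = (Fintype.card O : ℝ) := by
    have : ∑ c, F c = Fintype.card O := by
      rw [Fintype.card, Finset.card_eq_sum_card_fiberwise
        (f := owner) (t := univ) (fun o _ => mem_univ _)]
      exact Finset.sum_congr rfl fun c _ => by rw [← hF c]
    exact_mod_cast this
  -- ∑ 1_φ F = #{o : φ (owner o)}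
  have hsumφ : (∑ c, (if φ c then (F c : ℝ) else 0)) =
      ((Finset.univ.filter (fun o : O => φ (owner o))).card : ℝ) := by
    have : ∑ c, (if φ c then F c else 0) =
        (Finset.univ.filter (fun o : O => φ (owner o))).card := by
      rw [Finset.card_eq_sum_card_fiberwise
        (f := owner) (t := univ.filter φ)
        (fun o ho => by simpa using (mem_filter.mp ho).2)]
      rw [Finset.sum_filter]
      refine Finset.sum_congr rfl fun c _ => ?_
      split_ifs with h
      · rw [hF c]
        congr 1
        ext o
        simp only [mem_filter, mem_univ, true_and]
        constructor
        · exact fun h2 => ⟨h2 ▸ h, h2⟩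
        · exact fun h2 => h2.2
      · rfl
    calc (∑ c, (if φ c then (F c : ℝ) else 0))
        = ((∑ c, (if φ c then F c else 0) : ℕ) : ℝ) := by
          push_cast; apply Finset.sum_congr rfl; intros; split_ifs <;> simp
      _ = _ := by rw [this]
  rw [hjoin]
  have h1 : ((Finset.univ.filter (fun o : O => φ (owner o) ∧ ψ o)).card : ℝ) =
      ((Finset.univ.filter (fun o : O => φ (owner o))).card : ℝ) *
      ((Finset.univ.filter ψ).card : ℝ) / (Fintype.card O : ℝ) := by
    field_simp at hindep
    have h2 := hindep
    field_simp
    linarith [h2]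
  rw [h1, hsumφ, hsumF]
  field_simp
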